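/- The Montague–Scott Hierarchy axiom holds in ZF: for every set a there exists a set h such that for every k ⊆ h, either pot(k) ∈ h or a ⊆ pot(k). -/
import Mathlib

def pot (a : ZFSet) : ZFSet :=
  ZFSet.sep (fun x => ∃ c ∈ a, x ⊆ c) (ZFSet.powerset (ZFSet.sUnion a))

def Potent (a : ZFSet) : Prop := ∀ x, (∃ c, x ⊆ c ∧ c ∈ a) → x ∈ a

def IsHistory (h : ZFSet) : Prop := ∀ x ∈ h, x = pot (x ∩ h)

def IsLevel (s : ZFSet) : Prop := ∃ h, IsHistory h ∧ s = pot h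

attribute [local instance] Classical.allZFSetDefinable

theorem mem_pot {x a : ZFSet} : x ∈ pot a ↔ ∃ c ∈ a, x ⊆ c := by
  constructor
  · intro h
    exact (ZFSet.mem_sep.1 h).2
  · rintro ⟨c, hc, hxc⟩
    refine ZFSet.mem_sep.2 ⟨ZFSet.mem_powerset.2 ?_, c, hc, hxc⟩
    intro z hz
    exact ZFSet.mem_sUnion_of_mem (hxc hz) hc

theorem pot_potent {x y a : ZFSet} (hxy : x ⊆ y) (hy : y ∈ pot a) : x ∈ pot a := by
  obtain ⟨c, hc, hyc⟩ := mem_pot.1 hy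
  exact mem_pot.2 ⟨c, hc, hxy.trans hyc⟩

theorem pot_mono {a b : ZFSet} (h : a ⊆ b) : pot a ⊆ pot b := by
  intro x hx
  obtain ⟨c, hc, hxc⟩ := mem_pot.1 hx
  exact mem_pot.2 ⟨c, h hc, hxc⟩

theorem level_trans {s : ZFSet} (hs : IsLevel s) {y : ZFSet} (hy : y ∈ s) : y ⊆ s := by
  obtain ⟨h, hh, rfl⟩ := hs
  obtain ⟨c, hc, hyc⟩ := mem_pot.1 hy
  intro z hz
  have hzc : z ∈ c := hyc hz
  rw [hh c hc] at hzc
  obtain ⟨d, hd, hzd⟩ := mem_pot.1 hzc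
  exact mem_pot.2 ⟨d, (ZFSet.mem_inter.1 hd).2, hzd⟩

theorem level_potent {s : ZFSet} (hs : IsLevel s) {x y : ZFSet} (hxy : x ⊆ y) (hy : y ∈ s) :
    x ∈ s := by
  obtain ⟨h, hh, rfl⟩ := hs
  exact pot_potent hxy hy

/-- Members of histories give histories when intersected. -/
theorem hist_inter : ∀ c : ZFSet, ∀ h : ZFSet, IsHistory h → c ∈ h → IsHistory (c ∩ h) := by
  intro c
  induction c using ZFSet.inductionOn with
  | _ c IH =>
    intro h hh hch
    intro y hy
    obtain ⟨hyc, hyh⟩ := ZFSet.mem_inter.1 hy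
    have hy' := hh y hyh
    have key : y ∩ h = y ∩ (c ∩ h) := by
      apply ZFSet.ext
      intro z
      simp only [ZFSet.mem_inter]
      constructor
      · rintro ⟨hzy, hzh⟩
        refine ⟨hzy, ?_, hzh⟩
        -- z ∈ y, y ∈ c = pot (c ∩ h); y ⊆ d, d ∈ c ∩ h
        have hyc' : y ∈ pot (c ∩ h) := by rw [← hh c hch]; exact hyc
        obtain ⟨d, hd, hyd⟩ := mem_pot.1 hyc'
        obtain ⟨hdc, hdh⟩ := ZFSet.mem_inter.1 hd
        have hzd : z ∈ d := hyd hzy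
        -- d is a level: d ∈ h history, d ∈ c so IH applies
        have hdl : IsLevel d := ⟨d ∩ h, IH d hdc h hh hdh, hh d hdh⟩
        have : z ⊆ d := level_trans hdl hzd
        have : z ∈ pot (c ∩ h) := mem_pot.2 ⟨d, hd, this⟩
        rwa [← hh c hch] at this
      · rintro ⟨hzy, _, hzh⟩
        exact ⟨hzy, hzh⟩
    rw [key] at hy'
    exact hy'

theorem mem_hist_level {c h : ZFSet} (hh : IsHistory h) (hch : c ∈ h) : IsLevel c :=
  ⟨c ∩ h, hist_inter c h hh hch, hh c hch⟩

/-- The levels inside s. -/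
noncomputable def levs (s : ZFSet) : ZFSet := ZFSet.sep IsLevel s

theorem mem_levs {s x : ZFSet} : x ∈ levs s ↔ x ∈ s ∧ IsLevel x := ZFSet.mem_sep

/-- Lemma: every level is the pot of its levels, and those form a history. -/
theorem level_levs : ∀ s : ZFSet, IsLevel s → s = pot (levs s) ∧ IsHistory (levs s) := by
  intro s
  induction s using ZFSet.inductionOn with
  | _ s IH =>
    intro hs
    obtain ⟨h, hh, hsh⟩ := hs
    have hsub : h ⊆ s := by
      intro c hc
      rw [hsh]
      exact mem_pot.2 ⟨c, hc, fun z hz => hz⟩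
    have hls : h ⊆ levs s := fun c hc => mem_levs.2 ⟨hsub hc, mem_hist_level hh hc⟩
    have hpe : s = pot (levs s) := by
      apply ZFSet.ext
      intro x
      constructor
      · intro hx
        have hx' : x ∈ pot h := by rwa [hsh] at hx
        exact pot_mono hls hx'
      · intro hx
        obtain ⟨r, hr, hxr⟩ := mem_pot.1 hx
        obtain ⟨hrs, _⟩ := mem_levs.1 hr
        rw [hsh] at hrs ⊢
        exact pot_potent hxr hrs
    refine ⟨hpe, ?_⟩
    intro r hr
    obtain ⟨hrs, hrl⟩ := mem_levs.1 hr
    have hIH := (IH r hrs hrl).1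
    have key : levs r = r ∩ levs s := by
      apply ZFSet.ext
      intro q
      simp only [ZFSet.mem_inter, mem_levs]
      constructor
      · rintro ⟨hqr, hql⟩
        have hst : IsLevel s := ⟨h, hh, hsh⟩
        exact ⟨hqr, level_trans hst hrs hqr, hql⟩
      · rintro ⟨hqr, _, hql⟩
        exact ⟨hqr, hql⟩
    rw [← key]
    exact hIH

theorem level_tri : ∀ s : ZFSet, IsLevel s → ∀ t : ZFSet, IsLevel t →
    s ∈ t ∨ s = t ∨ t ∈ s := by
  intro s
  induction s using ZFSet.inductionOn with
  | _ s IH1 =>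
    intro hs t
    induction t using ZFSet.inductionOn with
    | _ t IH2 =>
      intro ht
      by_contra hcon
      push_neg at hcon
      obtain ⟨hst, hne, hts⟩ := hcon
      have hsub1 : s ⊆ t := by
        intro x hx
        have := (level_levs s hs).1
        rw [this] at hx
        obtain ⟨r, hr, hxr⟩ := mem_pot.1 hx
        obtain ⟨hrs, hrl⟩ := mem_levs.1 hr
        rcases IH1 r hrs hrl t ht with h1 | h1 | h1
        · exact level_potent ht hxr h1
        · exact absurd (h1 ▸ hrs) hts
        · exact absurd (level_trans hs hrs h1) hts
      have hsub2 : t ⊆ s := by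
        intro y hy
        have := (level_levs t ht).1
        rw [this] at hy
        obtain ⟨q, hq, hyq⟩ := mem_pot.1 hy
        obtain ⟨hqt, hql⟩ := mem_levs.1 hq
        rcases IH2 q hqt hql with h1 | h1 | h1
        · exact absurd (level_trans ht hqt h1) hst
        · exact absurd (h1 ▸ hqt) hst
        · exact level_potent hs hyq h1
      exact hne (ZFSet.ext fun z => ⟨fun hz => hsub1 hz, fun hz => hsub2 hz⟩)

/-- pot of a set of levels is a level. -/
theorem pot_levels_level {k : ZFSet} (hk : ∀ t ∈ k, IsLevel t) : IsLevel (pot k) := by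
  set K : ZFSet := ZFSet.sep IsLevel (pot k) with hK
  have hmemK : ∀ r, r ∈ K ↔ r ∈ pot k ∧ IsLevel r := fun r => ZFSet.mem_sep
  have hpe : pot k = pot K := by
    apply ZFSet.ext
    intro x
    constructor
    · intro hx
      obtain ⟨t, htk, hxt⟩ := mem_pot.1 hx
      have htK : t ∈ K := (hmemK t).2 ⟨mem_pot.2 ⟨t, htk, fun z hz => hz⟩, hk t htk⟩
      exact mem_pot.2 ⟨t, htK, hxt⟩
    · intro hx
      obtain ⟨r, hrK, hxr⟩ := mem_pot.1 hx
      obtain ⟨hrp, _⟩ := (hmemK r).1 hrK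
      obtain ⟨t, htk, hrt⟩ := mem_pot.1 hrp
      exact mem_pot.2 ⟨t, htk, hxr.trans hrt⟩
  have hKh : IsHistory K := by
    intro r hrK
    obtain ⟨hrp, hrl⟩ := (hmemK r).1 hrK
    have := (level_levs r hrl).1
    have key : levs r = r ∩ K := by
      apply ZFSet.ext
      intro q
      simp only [ZFSet.mem_inter, mem_levs, hmemK]
      constructor
      · rintro ⟨hqr, hql⟩
        obtain ⟨t, htk, hrt⟩ := mem_pot.1 hrp
        have hqt : q ∈ t := hrt hqr
        have hqsub : q ⊆ t := level_trans (hk t htk) hqt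
        exact ⟨hqr, mem_pot.2 ⟨t, htk, hqsub⟩, hql⟩
      · rintro ⟨hqr, _, hql⟩
        exact ⟨hqr, hql⟩
    rw [← key]
    exact this
  exact ⟨K, hKh, hpe⟩

open Classical in
/-- A canonical level above a set, if one exists. -/
noncomputable def levAbove (x : ZFSet) : ZFSet :=
  if h : ∃ s, IsLevel s ∧ x ⊆ s then h.choose else ∅

theorem levAbove_spec {x : ZFSet} (h : ∃ s, IsLevel s ∧ x ⊆ s) :
    IsLevel (levAbove x) ∧ x ⊆ levAbove x := by
  rw [levAbove, dif_pos h]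
  exact h.choose_spec

/-- Stratification: every set is included in some level. -/
theorem stratification : ∀ a : ZFSet, ∃ s, IsLevel s ∧ a ⊆ s := by
  intro a
  induction a using ZFSet.inductionOn with
  | _ a IH =>
    set k : ZFSet := ZFSet.image levAbove a with hk
    have hkl : ∀ t ∈ k, IsLevel t := by
      intro t ht
      obtain ⟨x, hx, rfl⟩ := ZFSet.mem_image.1 ht
      exact (levAbove_spec (IH x hx)).1
    refine ⟨pot k, pot_levels_level hkl, ?_⟩
    intro x hx
    have hex : ∃ s, IsLevel s ∧ x ⊆ s := IH x hx
    have h1 : levAbove x ∈ k := ZFSet.mem_image.2 ⟨x, hx, rfl⟩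
    have h2 : x ⊆ levAbove x := (levAbove_spec hex).2
    exact mem_pot.2 ⟨levAbove x, h1, h2⟩

theorem stmt15 (a : ZFSet) :
    ∃ h : ZFSet, ∀ k : ZFSet, k ⊆ h → (pot k ∈ h ∨ a ⊆ pot k) := by
  obtain ⟨s, hs, has⟩ := stratification a
  refine ⟨levs s, ?_⟩
  intro k hk
  have hkl : ∀ t ∈ k, IsLevel t := fun t ht => (mem_levs.1 (hk ht)).2
  have hpl : IsLevel (pot k) := pot_levels_level hkl
  rcases level_tri (pot k) hpl s hs with h1 | h1 | h1
  · exact Or.inl (mem_levs.2 ⟨h1, hpl⟩)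
  · exact Or.inr (h1 ▸ has)
  · exact Or.inr (fun z hz => level_trans hpl h1 (has hz))
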